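/- Uniqueness of the coefficient family A: let A_{β,k₁;γ,k₂} ∈ ℂ (β,γ ∈ ℤ; k₁,k₂ ∈ ℤ_{≥0}) satisfy A_{β,k₁;γ,k₂} = A_{γ,k₂;β,k₁} and A_{β,k₁;γ,k₂} = 0 whenever k₁ + k₂ is odd, and set A_{α₁,α₂}(z₁,z₂) := Σ_{k₁,k₂≥0} A_{α₁,k₁;α₂,k₂} z₁^{k₁} z₂^{k₂}. Suppose that for all α₁, α₂ ∈ ℤ with α := α₁ + α₂, the identity (1 + z₁∂_{z₁} + z₂∂_{z₂}) [ S(α₁z₂ − α₂z₁) (1/T_α)(z₁+z₂) ] = A_{α₁,α₂}(z₁,z₂) · (1/T_{α₁})(z₁) · (1/T_{α₂})(z₂) + S(α₁z₂ − α₂z₁) (1/T_α)(z₁+z₂) · Σ_{h≥1} A_{0,1;α,2h−1} (z₁+z₂)^{2h} holds in ℂ[[z₁,z₂]]. Then A is uniquely determined, and in fact A_{α₁,α₂}(z₁,z₂) = (T_{α₁}(z₁) T_{α₂}(z₂) / T_{α₁+α₂}(z₁+z₂)) · (ζ̄(α₁z₂ − α₂z₁)/2) for all α₁, α₂ ∈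 ℤ. -/

import Mathlib

/-! Formal power series `S(z) := (e^{z/2} − e^{−z/2})/z = Σ_{k≥0} z^{2k}/(4^k (2k+1)!)`
and `ζ̄(z) := e^{z/2} + e^{−z/2}` over `ℂ`, the series `T_α(z) := S(z)/S(αz)` and
`(1/T_α)(z) := S(αz)/S(z)` for `α ∈ ℤ`, and composition with linear forms
`c₁z₁ + c₂z₂` inside `ℂ[[z₁,z₂]]`. -/

/-- `ℂ[[z₁,z₂]]`; the variable `0` is `z₁` and the variable `1` is `z₂`. -/
abbrev M2 : Type := MvPowerSeries (Fin 2) ℂ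

/-- `S(z) := (e^{z/2} − e^{−z/2})/z = Σ_{k≥0} z^{2k}/(4^k (2k+1)!)`. -/
noncomputable def Sser : PowerSeries ℂ :=
  PowerSeries.mk fun n => if Even n then 1 / (4 ^ (n / 2) * (n + 1).factorial) else 0

/-- `ζ̄(z) := e^{z/2} + e^{−z/2} = Σ_{n≥0} ((1/2)^n + (−1/2)^n) z^n / n!`. -/
noncomputable def Zser : PowerSeries ℂ :=
  PowerSeries.mk fun n => ((1 / 2 : ℂ) ^ n + (-1 / 2 : ℂ) ^ n) / n.factorial

/-- `T_α(z) := S(z)/S(αz)`, a well-defined power series since `S(0) = 1`. -/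
noncomputable def Tser (α : ℤ) : PowerSeries ℂ :=
  Sser * (PowerSeries.rescale (α : ℂ) Sser)⁻¹

/-- `(1/T_α)(z) := S(αz)/S(z)`, a well-defined power series since `S(0) = 1`. -/
noncomputable def Tinv (α : ℤ) : PowerSeries ℂ :=
  PowerSeries.rescale (α : ℂ) Sser * Sser⁻¹

/-- Composition `P(c₁z₁ + c₂z₂) ∈ ℂ[[z₁,z₂]]` of a one-variable power series `P` with a
linear form: the coefficient of `z₁^{i}z₂^{j}` is `P_{i+j}·C(i+j,i)·c₁^i·c₂^j`. -/
noncomputable def compLin (P : PowerSeries ℂ) (c1 c2 : ℂ) : M2 := fun m =>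
  PowerSeries.coeff (m 0 + m 1) P * ((m 0 + m 1).choose (m 0) : ℂ) *
    c1 ^ (m 0) * c2 ^ (m 1)

/-- The operator `1 + z₁∂_{z₁} + z₂∂_{z₂}` on `ℂ[[z₁,z₂]]`. -/
noncomputable def eulerOp (f : M2) : M2 := fun m => ((m 0 + m 1 + 1 : ℕ) : ℂ) * f m

/-- The operator `z·d/dz` on `ℂ[[z]]`. -/
noncomputable def zddz (P : PowerSeries ℂ) : PowerSeries ℂ :=
  PowerSeries.mk fun n => (n : ℂ) * PowerSeries.coeff n P

/-- The generating series `A_{α₁,α₂}(z₁,z₂) := Σ_{k₁,k₂≥0} A_{α₁,k₁;α₂,k₂} z₁^{k₁} z₂^{k₂}`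
of a coefficient family `A`. -/
noncomputable def genFun (A : ℤ → ℕ → ℤ → ℕ → ℂ) (α₁ α₂ : ℤ) : M2 := fun m =>
  A α₁ (m 0) α₂ (m 1)

/-- The one-variable series `Σ_{h≥1} A_{0,1;α,2h−1} z^{2h}`. -/
noncomputable def Hser (A : ℤ → ℕ → ℤ → ℕ → ℂ) (α : ℤ) : PowerSeries ℂ :=
  PowerSeries.mk fun n => if 2 ≤ n ∧ Even n then A 0 1 α (n - 1) else 0

open Finsupp Finset

noncomputable def e2 (a b : ℕ) : Fin 2 →₀ ℕ := Finsupp.single 0 a + Finsupp.single 1 b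

lemma e2_0 (a b : ℕ) : e2 a b 0 = a := by simp [e2]
lemma e2_1 (a b : ℕ) : e2 a b 1 = b := by simp [e2, Finsupp.single_apply]
lemma e2_eta (m : Fin 2 →₀ ℕ) : e2 (m 0) (m 1) = m := by
  ext i
  fin_cases i
  · simp [e2]
  · simp [e2, Finsupp.single_apply]

lemma coeff_mul_e2 (f g : MvPowerSeries (Fin 2) ℂ) (a b : ℕ) :
    MvPowerSeries.coeff (e2 a b) (f * g) =
    ∑ i ∈ range (a+1), ∑ j ∈ range (b+1),
      (MvPowerSeries.coeff (e2 i j) f) * (MvPowerSeries.coeff (e2 (a-i) (b-j)) g) := by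
  rw [MvPowerSeries.coeff_mul, ← Finset.sum_product']
  apply Finset.sum_nbij' (i := fun p => (p.1 0, p.1 1))
    (j := fun q => (e2 q.1 q.2, e2 (a - q.1) (b - q.2)))
  · intro p hp
    rw [Finset.HasAntidiagonal.mem_antidiagonal] at hp
    have h0 : p.1 0 + p.2 0 = a := by
      have := congrArg (fun m => m 0) hp; simpa [e2_0] using this
    have h1 : p.1 1 + p.2 1 = b := by
      have := congrArg (fun m => m 1) hp; simpa [e2_1] using this
    simp only [Finset.mem_product, Finset.mem_range]
    omega
  · intro q hq
    simp only [Finset.mem_product, Finset.mem_range] at hq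
    rw [Finset.HasAntidiagonal.mem_antidiagonal]
    ext i
    fin_cases i <;> simp [e2_0, e2_1] <;> omega
  · intro p hp
    rw [Finset.HasAntidiagonal.mem_antidiagonal] at hp
    have h0 : p.1 0 + p.2 0 = a := by
      have := congrArg (fun m => m 0) hp; simpa [e2_0] using this
    have h1 : p.1 1 + p.2 1 = b := by
      have := congrArg (fun m => m 1) hp; simpa [e2_1] using this
    have e1 : e2 (p.1 0) (p.1 1) = p.1 := e2_eta _
    have e2' : e2 (a - p.1 0) (b - p.1 1) = p.2 := by
      rw [show a - p.1 0 = p.2 0 by omega, show b - p.1 1 = p.2 1 by omega]; exact e2_eta _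
    simp [e1, e2']
  · intro q hq
    simp [e2_0, e2_1]
  · intro p hp
    rw [Finset.HasAntidiagonal.mem_antidiagonal] at hp
    have h0 : p.1 0 + p.2 0 = a := by
      have := congrArg (fun m => m 0) hp; simpa [e2_0] using this
    have h1 : p.1 1 + p.2 1 = b := by
      have := congrArg (fun m => m 1) hp; simpa [e2_1] using this
    have e1 : e2 (p.1 0) (p.1 1) = p.1 := e2_eta _
    have e2' : e2 (a - p.1 0) (b - p.1 1) = p.2 := by
      rw [show a - p.1 0 = p.2 0 by omega, show b - p.1 1 = p.2 1 by omega]; exact e2_eta _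
    simp [e1, e2']

lemma M2coeff (f : M2) (m : Fin 2 →₀ ℕ) : MvPowerSeries.coeff m f = f m := rfl

lemma coeff_compLin (P : PowerSeries ℂ) (c1 c2 : ℂ) (a b : ℕ) :
    MvPowerSeries.coeff (e2 a b) (compLin P c1 c2) =
      PowerSeries.coeff (a + b) P * ((a+b).choose a : ℂ) * c1 ^ a * c2 ^ b := by
  rw [M2coeff]
  simp only [compLin, e2_0, e2_1]

lemma compLin_mul (P Q : PowerSeries ℂ) (c1 c2 : ℂ) :
    compLin (P * Q) c1 c2 = compLin P c1 c2 * compLin Q c1 c2 := by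
  apply MvPowerSeries.ext; intro m
  rw [← e2_eta m]
  set a := m 0; set b := m 1
  rw [coeff_mul_e2, coeff_compLin]
  set F : ℕ × ℕ → ℂ := fun q =>
    PowerSeries.coeff q.1 P * PowerSeries.coeff (a + b - q.1) Q *
      ((q.1.choose q.2 : ℕ) : ℂ) * (((a + b - q.1).choose (a - q.2) : ℕ) : ℂ) with hF
  have step1 : ∑ i ∈ range (a+1), ∑ j ∈ range (b+1),
      (MvPowerSeries.coeff (e2 i j) (compLin P c1 c2)) *
      (MvPowerSeries.coeff (e2 (a-i) (b-j)) (compLin Q c1 c2)) =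
      (∑ p ∈ range (a+1) ×ˢ range (b+1), F (p.1 + p.2, p.1)) * (c1 ^ a * c2 ^ b) := by
    rw [Finset.sum_mul]
    rw [← Finset.sum_product']
    apply Finset.sum_congr rfl
    intro p hp
    simp only [Finset.mem_product, Finset.mem_range] at hp
    obtain ⟨hi, hj⟩ := hp
    rw [coeff_compLin, coeff_compLin, hF]
    have h1 : a - p.1 + (b - p.2) = a + b - (p.1 + p.2) := by omega
    have h2 : c1 ^ p.1 * c1 ^ (a - p.1) = c1 ^ a := by
      rw [← pow_add]; congr 1; omega
    have h3 : c2 ^ p.2 * c2 ^ (b - p.2) = c2 ^ b := by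
      rw [← pow_add]; congr 1; omega
    simp only [h1]
    ring_nf
    rw [← h2, ← h3]
    ring
  rw [step1]
  have step2 : ∑ p ∈ range (a+1) ×ˢ range (b+1), F (p.1 + p.2, p.1) =
      ∑ q ∈ range (a+b+1) ×ˢ range (a+1), F q := by
    apply Finset.sum_bij_ne_zero (i := fun p _ _ => (p.1 + p.2, p.1))
    · intro p hp _
      simp only [Finset.mem_product, Finset.mem_range] at hp ⊢
      omega
    · intro p hp hp' q hq hq' hpq
      have h1 := congrArg Prod.fst hpq
      have h2 := congrArg Prod.snd hpq
      simp only at h1 h2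
      ext
      · exact h2
      · omega
    · intro q hq hq'
      simp only [Finset.mem_product, Finset.mem_range] at hq
      have hxn : q.2 ≤ q.1 := by
        by_contra h
        apply hq'
        rw [hF]
        simp [Nat.choose_eq_zero_of_lt (by omega : q.1 < q.2)]
      have hjb : q.1 - q.2 ≤ b := by
        by_contra h
        apply hq'
        rw [hF]
        have : a + b - q.1 < a - q.2 := by omega
        simp [Nat.choose_eq_zero_of_lt this]
      have hkey : q.2 + (q.1 - q.2) = q.1 := by omega
      refine ⟨(q.2, q.1 - q.2), ?_, ?_, ?_⟩
      · simp only [Finset.mem_product, Finset.mem_range]; omega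
      · show F (q.2 + (q.1 - q.2), q.2) ≠ 0
        rw [hkey]; simpa using hq'
      · show (q.2 + (q.1 - q.2), q.2) = q
        rw [hkey]
    · intro p hp hp'
      rfl
  rw [step2]
  have step3 : ∑ q ∈ range (a+b+1) ×ˢ range (a+1), F q =
      PowerSeries.coeff (a + b) (P * Q) * ((a+b).choose a : ℕ) := by
    rw [PowerSeries.coeff_mul, Finset.Nat.sum_antidiagonal_eq_sum_range_succ_mk,
      Finset.sum_mul, Finset.sum_product]
    apply Finset.sum_congr rfl
    intro n hn
    simp only [Finset.mem_range] at hn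
    have hv : ((a+b).choose a : ℕ) = ∑ x ∈ range (a+1), n.choose x * (a+b-n).choose (a-x) := by
      have := Nat.add_choose_eq n (a + b - n) a
      rw [Finset.Nat.sum_antidiagonal_eq_sum_range_succ_mk] at this
      rw [show n + (a + b - n) = a + b by omega] at this
      exact this
    rw [hv, Nat.cast_sum, Finset.mul_sum]
    apply Finset.sum_congr rfl
    intro x hx
    rw [hF]
    push_cast
    ring
  rw [step3]
  ring

lemma e2_eq_zero (a b : ℕ) : e2 a b = 0 ↔ a = 0 ∧ b = 0 := by
  constructor
  · intro h
    constructor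
    · have := congrArg (fun m => m 0) h; simpa [e2_0] using this
    · have := congrArg (fun m => m 1) h; simpa [e2_1] using this
  · rintro ⟨rfl, rfl⟩
    ext i; fin_cases i <;> simp [e2]

lemma compLin_one (c1 c2 : ℂ) : compLin 1 c1 c2 = 1 := by
  apply MvPowerSeries.ext; intro m
  rw [← e2_eta m, coeff_compLin, MvPowerSeries.coeff_one]
  by_cases h : m 0 + m 1 = 0
  · obtain ⟨h0, h1⟩ : m 0 = 0 ∧ m 1 = 0 := by omega
    rw [h0, h1]
    simp [e2_eq_zero]
  · rw [PowerSeries.coeff_one, if_neg h, if_neg (by rw [e2_eq_zero]; omega)]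
    ring

lemma compLin_add (P Q : PowerSeries ℂ) (c1 c2 : ℂ) :
    compLin (P + Q) c1 c2 = compLin P c1 c2 + compLin Q c1 c2 := by
  apply MvPowerSeries.ext; intro m
  rw [← e2_eta m, map_add, coeff_compLin, coeff_compLin, coeff_compLin, map_add]
  ring

lemma compLin_sub (P Q : PowerSeries ℂ) (c1 c2 : ℂ) :
    compLin (P - Q) c1 c2 = compLin P c1 c2 - compLin Q c1 c2 := by
  apply MvPowerSeries.ext; intro m
  rw [← e2_eta m, map_sub, coeff_compLin, coeff_compLin, coeff_compLin, map_sub]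
  ring

lemma compLin_smul (r : ℂ) (P : PowerSeries ℂ) (c1 c2 : ℂ) :
    compLin (r • P) c1 c2 = r • compLin P c1 c2 := by
  apply MvPowerSeries.ext; intro m
  rw [← e2_eta m, map_smul, coeff_compLin, coeff_compLin, map_smul]
  simp only [smul_eq_mul]
  ring

lemma compLin_rescale (P : PowerSeries ℂ) (c c1 c2 : ℂ) :
    compLin (PowerSeries.rescale c P) c1 c2 = compLin P (c * c1) (c * c2) := by
  apply MvPowerSeries.ext; intro m
  rw [← e2_eta m, coeff_compLin, coeff_compLin, PowerSeries.coeff_rescale]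
  rw [mul_pow, mul_pow, pow_add]
  ring

lemma coeff_S (n : ℕ) : PowerSeries.coeff n Sser =
    if Even n then 1 / ((4:ℂ) ^ (n / 2) * ((n + 1).factorial : ℂ)) else 0 := by
  simp [Sser, PowerSeries.coeff_mk]

lemma coeff_Z (n : ℕ) : PowerSeries.coeff n Zser =
    ((1 / 2 : ℂ) ^ n + (-1 / 2 : ℂ) ^ n) / n.factorial := by
  simp [Zser, PowerSeries.coeff_mk]

lemma S0 : PowerSeries.coeff 0 Sser = 1 := by
  rw [coeff_S]; norm_num

lemma S1 : PowerSeries.coeff 1 Sser = 0 := by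
  rw [coeff_S]; simp [Nat.even_iff]

lemma Z0 : PowerSeries.coeff 0 Zser = 2 := by
  rw [coeff_Z]; norm_num

lemma Z1 : PowerSeries.coeff 1 Zser = 0 := by
  rw [coeff_Z]; norm_num

lemma constS : PowerSeries.constantCoeff Sser = 1 := by
  rw [← PowerSeries.coeff_zero_eq_constantCoeff]; exact S0

lemma constS_rescale (c : ℂ) :
    PowerSeries.constantCoeff (PowerSeries.rescale c Sser) = 1 := by
  rw [← PowerSeries.coeff_zero_eq_constantCoeff, PowerSeries.coeff_rescale]
  rw [S0]; ring

lemma TinvTser (α : ℤ) : Tinv α * Tser α = 1 := by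
  have h1 : Sser * Sser⁻¹ = 1 :=
    PowerSeries.mul_inv_cancel _ (by rw [constS]; norm_num)
  have h2 : PowerSeries.rescale (α : ℂ) Sser * (PowerSeries.rescale (α : ℂ) Sser)⁻¹ = 1 :=
    PowerSeries.mul_inv_cancel _ (by rw [constS_rescale]; norm_num)
  calc Tinv α * Tser α
      = (Sser * Sser⁻¹) * (PowerSeries.rescale (α : ℂ) Sser *
          (PowerSeries.rescale (α : ℂ) Sser)⁻¹) := by rw [Tinv, Tser]; ring
    _ = 1 := by rw [h1, h2, mul_one]

lemma constTinv (α : ℤ) : PowerSeries.constantCoeff (Tinv α) = 1 := by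
  rw [Tinv, map_mul, constS_rescale, PowerSeries.constantCoeff_inv, constS]
  norm_num

/-- `Hc α := (zddz (Tinv α)) / (Tinv α)`. -/
noncomputable def Hc (α : ℤ) : PowerSeries ℂ := (Tinv α)⁻¹ * zddz (Tinv α)

lemma G_Hc (α : ℤ) : Tinv α * Hc α = zddz (Tinv α) := by
  rw [Hc, ← mul_assoc, PowerSeries.mul_inv_cancel _ (by rw [constTinv]; norm_num), one_mul]

lemma coeff_zddz (P : PowerSeries ℂ) (n : ℕ) :
    PowerSeries.coeff n (zddz P) = (n : ℂ) * PowerSeries.coeff n P := by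
  simp [zddz, PowerSeries.coeff_mk]

lemma zddz0 (P : PowerSeries ℂ) : PowerSeries.coeff 0 (zddz P) = 0 := by
  rw [coeff_zddz]; simp

/-- The degree operator `z₁∂₁ + z₂∂₂`. -/
noncomputable def E0 (f : M2) : M2 := fun m => ((m 0 + m 1 : ℕ) : ℂ) * f m

lemma coeff_E0 (f : M2) (a b : ℕ) :
    MvPowerSeries.coeff (e2 a b) (E0 f) =
      ((a + b : ℕ) : ℂ) * MvPowerSeries.coeff (e2 a b) f := by
  rw [M2coeff, M2coeff, E0]
  simp [e2_0, e2_1]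

lemma eulerOp_eq (f : M2) : eulerOp f = f + E0 f := by
  funext m
  show ((m 0 + m 1 + 1 : ℕ) : ℂ) * f m = f m + ((m 0 + m 1 : ℕ) : ℂ) * f m
  push_cast
  ring

lemma E0_mul (f g : M2) : E0 (f * g) = E0 f * g + f * E0 g := by
  apply MvPowerSeries.ext; intro m
  rw [← e2_eta m]
  set a := m 0; set b := m 1
  rw [map_add, coeff_E0, coeff_mul_e2, coeff_mul_e2, coeff_mul_e2, Finset.mul_sum,
    ← Finset.sum_add_distrib]
  apply Finset.sum_congr rfl
  intro i hi
  rw [Finset.mul_sum, ← Finset.sum_add_distrib]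
  apply Finset.sum_congr rfl
  intro j hj
  simp only [Finset.mem_range] at hi hj
  rw [coeff_E0, coeff_E0]
  have : ((a + b : ℕ) : ℂ) = ((i + j : ℕ) : ℂ) + ((a - i + (b - j) : ℕ) : ℂ) := by
    push_cast [Nat.cast_sub (by omega : i ≤ a), Nat.cast_sub (by omega : j ≤ b)]
    ring
  rw [this]
  ring

lemma E0_compLin (P : PowerSeries ℂ) (c1 c2 : ℂ) :
    E0 (compLin P c1 c2) = compLin (zddz P) c1 c2 := by
  funext m
  show ((m 0 + m 1 : ℕ) : ℂ) * compLin P c1 c2 m = _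
  simp only [compLin, coeff_zddz]
  ring

lemma S_zddz : Sser + zddz Sser = (1 / 2 : ℂ) • Zser := by
  apply PowerSeries.ext; intro n
  rw [map_add, coeff_zddz, map_smul, coeff_S, coeff_Z]
  by_cases h : Even n
  · rw [if_pos h]
    obtain ⟨k, hk⟩ := h
    have h4 : (4 : ℂ) ^ (n / 2) = 2 ^ n := by
      rw [show (4:ℂ) = 2^2 by norm_num, ← pow_mul]
      congr 1
      omega
    have hneg : (-1 / 2 : ℂ) ^ n = (1 / 2 : ℂ) ^ n := by
      rw [show (-1/2 : ℂ) = -(1/2) by norm_num]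
      exact (Even.neg_pow ⟨k, hk⟩ _)
    have hfact : (((n + 1).factorial : ℕ) : ℂ) = ((n : ℂ) + 1) * (n.factorial : ℂ) := by
      rw [Nat.factorial_succ]
      push_cast
      ring
    rw [h4, hneg, hfact]
    have h1 : ((n.factorial : ℕ) : ℂ) ≠ 0 := Nat.cast_ne_zero.mpr n.factorial_ne_zero
    have h2 : (2 : ℂ) ^ n ≠ 0 := pow_ne_zero _ (by norm_num)
    have h3 : ((n : ℂ) + 1) ≠ 0 := by
      have : (0:ℝ) ≤ n := Nat.cast_nonneg n
      intro hcon
      have := congrArg Complex.re hcon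
      simp [Complex.add_re] at this
      have : (n:ℝ) = -1 := by
        have h' := this
        push_cast at h' ⊢
        linarith
      linarith [Nat.cast_nonneg (α := ℝ) n]
    rw [smul_eq_mul, div_pow, one_pow]
    field_simp
    ring
  · rw [if_neg h]
    have hodd : Odd n := Nat.odd_iff.mpr (Nat.not_even_iff.mp h)
    have hneg : (-1 / 2 : ℂ) ^ n = -((1 / 2 : ℂ) ^ n) := by
      rw [show (-1/2 : ℂ) = -(1/2) by norm_num]
      exact hodd.neg_pow _
    rw [hneg]
    simp

lemma euler_prod (P Q : PowerSeries ℂ) (c1 c2 d1 d2 : ℂ) :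
    eulerOp (compLin P c1 c2 * compLin Q d1 d2) =
      compLin (P + zddz P) c1 c2 * compLin Q d1 d2 +
        compLin P c1 c2 * compLin (zddz Q) d1 d2 := by
  rw [eulerOp_eq, E0_mul, E0_compLin, E0_compLin, compLin_add]
  ring

lemma coeff_compLin_10 (X : PowerSeries ℂ) (i j : ℕ) :
    MvPowerSeries.coeff (e2 i j) (compLin X 1 0) =
      if j = 0 then PowerSeries.coeff i X else 0 := by
  rw [coeff_compLin]
  by_cases h : j = 0
  · subst h; simp
  · rw [if_neg h, zero_pow h]; ring

lemma coeff_compLin_01 (Y : PowerSeries ℂ) (i j : ℕ) :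
    MvPowerSeries.coeff (e2 i j) (compLin Y 0 1) =
      if i = 0 then PowerSeries.coeff j Y else 0 := by
  rw [coeff_compLin]
  by_cases h : i = 0
  · subst h; simp
  · rw [if_neg h, zero_pow h]; ring

lemma coeff_compLin_11 (R : PowerSeries ℂ) (i j : ℕ) :
    MvPowerSeries.coeff (e2 i j) (compLin R 1 1) =
      PowerSeries.coeff (i + j) R * ((i+j).choose i : ℕ) := by
  rw [coeff_compLin]; ring

lemma helper1 (Y R : PowerSeries ℂ) (k : ℕ) :
    MvPowerSeries.coeff (e2 0 k) (compLin Y 0 1 * compLin R 1 1) =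
      PowerSeries.coeff k (Y * R) := by
  rw [coeff_mul_e2, PowerSeries.coeff_mul, Finset.Nat.sum_antidiagonal_eq_sum_range_succ_mk]
  rw [Finset.sum_range_one]
  apply Finset.sum_congr rfl
  intro j hj
  rw [coeff_compLin_01, coeff_compLin_11, if_pos rfl]
  simp

lemma helper2 (Y R : PowerSeries ℂ) (k : ℕ) :
    MvPowerSeries.coeff (e2 1 k) (compLin Y 0 1 * compLin R 1 1) =
      PowerSeries.coeff (k + 1) (Y * zddz R) := by
  rw [coeff_mul_e2, PowerSeries.coeff_mul, Finset.Nat.sum_antidiagonal_eq_sum_range_succ_mk]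
  rw [Finset.sum_range_succ (n := 1), Finset.sum_range_one]
  have hz : ∑ j ∈ Finset.range (k+1),
      MvPowerSeries.coeff (e2 1 j) (compLin Y 0 1) *
        MvPowerSeries.coeff (e2 (1-1) (k-j)) (compLin R 1 1) = 0 := by
    apply Finset.sum_eq_zero
    intro j hj
    rw [coeff_compLin_01, if_neg one_ne_zero]
    ring
  rw [hz, add_zero]
  rw [Finset.sum_range_succ (n := k + 1)]
  have hlast : PowerSeries.coeff (k+1) Y * PowerSeries.coeff (k+1-(k+1)) (zddz R) = 0 := by
    rw [Nat.sub_self, zddz0]; ring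
  rw [hlast, add_zero]
  apply Finset.sum_congr rfl
  intro j hj
  simp only [Finset.mem_range] at hj
  rw [coeff_compLin_01, if_pos rfl, coeff_compLin_11, coeff_zddz]
  rw [Nat.choose_one_right]
  rw [show 1 + (k - j) = k + 1 - j by omega]
  ring

lemma lemmaE (X Y R : PowerSeries ℂ) (k : ℕ) :
    MvPowerSeries.coeff (e2 1 k) (compLin X 1 0 * compLin Y 0 1 * compLin R 1 1) =
      PowerSeries.coeff 1 X * PowerSeries.coeff k (Y * R) +
        PowerSeries.coeff 0 X * PowerSeries.coeff (k + 1) (Y * zddz R) := by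
  rw [mul_assoc, coeff_mul_e2]
  have hinner : ∀ i, ∑ j ∈ Finset.range (k+1),
      MvPowerSeries.coeff (e2 i j) (compLin X 1 0) *
        MvPowerSeries.coeff (e2 (1-i) (k-j)) (compLin Y 0 1 * compLin R 1 1) =
      PowerSeries.coeff i X *
        MvPowerSeries.coeff (e2 (1-i) k) (compLin Y 0 1 * compLin R 1 1) := by
    intro i
    rw [Finset.sum_eq_single_of_mem 0 (Finset.mem_range.mpr (by omega))]
    · rw [coeff_compLin_10, if_pos rfl, Nat.sub_zero]
    · intro j hj hne
      rw [coeff_compLin_10, if_neg hne]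
      ring
  rw [Finset.sum_congr rfl (fun i _ => hinner i)]
  rw [Finset.sum_range_succ, Finset.sum_range_one]
  rw [show (1:ℕ) - 0 = 1 by rfl, show (1:ℕ) - 1 = 0 by rfl, helper1, helper2]
  ring

lemma coeff_Y_zddz_GD (Y G D : PowerSeries ℂ) (n : ℕ)
    (hY : PowerSeries.coeff 0 Y = 1) (hG : PowerSeries.coeff 0 G = 1)
    (hD : ∀ q < n, PowerSeries.coeff q D = 0) :
    PowerSeries.coeff n (Y * zddz (G * D)) = (n : ℂ) * PowerSeries.coeff n D := by
  have hGD : ∀ v < n, PowerSeries.coeff v (G * D) = 0 := by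
    intro v hv
    rw [PowerSeries.coeff_mul, Finset.Nat.sum_antidiagonal_eq_sum_range_succ_mk]
    apply Finset.sum_eq_zero
    intro p hp
    simp only [Finset.mem_range] at hp
    rw [hD (v - p) (by omega)]
    ring
  by_cases hn : n = 0
  · subst hn
    rw [PowerSeries.coeff_zero_eq_constantCoeff, map_mul]
    have : PowerSeries.constantCoeff (zddz (G * D)) = 0 := by
      rw [← PowerSeries.coeff_zero_eq_constantCoeff]; exact zddz0 _
    rw [this]
    simp
  · rw [PowerSeries.coeff_mul, Finset.Nat.sum_antidiagonal_eq_sum_range_succ_mk]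
    rw [Finset.sum_eq_single_of_mem 0 (Finset.mem_range.mpr (by omega))]
    · rw [hY, Nat.sub_zero, coeff_zddz, one_mul]
      congr 1
      rw [PowerSeries.coeff_mul, Finset.Nat.sum_antidiagonal_eq_sum_range_succ_mk]
      rw [Finset.sum_eq_single_of_mem 0 (Finset.mem_range.mpr (by omega))]
      · rw [hG, Nat.sub_zero, one_mul]
      · intro p hp hpne
        simp only [Finset.mem_range] at hp
        rw [hD (n - p) (by omega)]
        ring
    · intro i hi hine
      simp only [Finset.mem_range] at hi
      rw [coeff_zddz, hGD (n - i) (by omega)]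
      ring

lemma constTser (α : ℤ) : PowerSeries.constantCoeff (Tser α) = 1 := by
  rw [Tser, map_mul, constS, PowerSeries.constantCoeff_inv, constS_rescale]
  norm_num

lemma coeff0_Tser (α : ℤ) : PowerSeries.coeff 0 (Tser α) = 1 := by
  rw [PowerSeries.coeff_zero_eq_constantCoeff]; exact constTser α

lemma coeff0_Tinv (α : ℤ) : PowerSeries.coeff 0 (Tinv α) = 1 := by
  rw [PowerSeries.coeff_zero_eq_constantCoeff]; exact constTinv α

lemma Tser0 : Tser 0 = Sser := by
  rw [Tser]
  have : PowerSeries.rescale ((0:ℤ) : ℂ) Sser = 1 := by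
    rw [Int.cast_zero, PowerSeries.rescale_zero]
    simp [constS]
  rw [this, inv_one, mul_one]

lemma coeff_genFun (A : ℤ → ℕ → ℤ → ℕ → ℂ) (β γ : ℤ) (a b : ℕ) :
    MvPowerSeries.coeff (e2 a b) (genFun A β γ) = A β a γ b := by
  rw [M2coeff, genFun]
  simp [e2_0, e2_1]

lemma coeff_Hser (A : ℤ → ℕ → ℤ → ℕ → ℂ) (α : ℤ) (n : ℕ) :
    PowerSeries.coeff n (Hser A α) =
      if 2 ≤ n ∧ Even n then A 0 1 α (n - 1) else 0 := by
  simp [Hser, PowerSeries.coeff_mk]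

lemma coeff0_Hc (α : ℤ) : PowerSeries.coeff 0 (Hc α) = 0 := by
  rw [Hc, PowerSeries.coeff_zero_eq_constantCoeff, map_mul]
  have : PowerSeries.constantCoeff (zddz (Tinv α)) = 0 := by
    rw [← PowerSeries.coeff_zero_eq_constantCoeff]; exact zddz0 _
  rw [this, mul_zero]

lemma coeff1_mul_rescale (c : ℂ) (P Q : PowerSeries ℂ)
    (hP : PowerSeries.coeff 1 P = 0) (hQ : PowerSeries.coeff 1 Q = 0) :
    PowerSeries.coeff 1 (PowerSeries.rescale c P * Q) = 0 := by
  rw [PowerSeries.coeff_mul, Finset.Nat.sum_antidiagonal_eq_sum_range_succ_mk]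
  rw [Finset.sum_range_succ, Finset.sum_range_one]
  rw [PowerSeries.coeff_rescale, PowerSeries.coeff_rescale, hP, hQ]
  ring

lemma coeff0_mul_rescale (c : ℂ) (P Q : PowerSeries ℂ) :
    PowerSeries.coeff 0 (PowerSeries.rescale c P * Q) =
      PowerSeries.coeff 0 P * PowerSeries.coeff 0 Q := by
  rw [PowerSeries.coeff_zero_eq_constantCoeff, map_mul]
  have h1 : PowerSeries.constantCoeff (PowerSeries.rescale c P) = PowerSeries.coeff 0 P := by
    rw [← PowerSeries.coeff_zero_eq_constantCoeff, PowerSeries.coeff_rescale]; ring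
  have h2 : PowerSeries.constantCoeff Q = PowerSeries.coeff 0 Q := by
    rw [PowerSeries.coeff_zero_eq_constantCoeff]
  rw [h1, h2, PowerSeries.coeff_zero_eq_constantCoeff]

lemma TserTinv (α : ℤ) : Tser α * Tinv α = 1 := by
  rw [mul_comm]; exact TinvTser α

lemma Y_zddz_G (α : ℤ) : Tser α * zddz (Tinv α) = Hc α := by
  rw [← G_Hc, ← mul_assoc, TserTinv, one_mul]

lemma Hstep (A : ℤ → ℕ → ℤ → ℕ → ℂ)
    (hodd : ∀ (β : ℤ) (k₁ : ℕ) (γ : ℤ) (k₂ : ℕ), ¬ Even (k₁ + k₂) → A β k₁ γ k₂ = 0)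
    (heq : ∀ α₁ α₂ : ℤ,
      eulerOp (compLin Sser (-(α₂ : ℂ)) (α₁ : ℂ) * compLin (Tinv (α₁ + α₂)) 1 1) =
        genFun A α₁ α₂ * compLin (Tinv α₁) 1 0 * compLin (Tinv α₂) 0 1 +
          compLin Sser (-(α₂ : ℂ)) (α₁ : ℂ) * compLin (Tinv (α₁ + α₂)) 1 1 *
            compLin (Hser A (α₁ + α₂)) 1 1)
    (α : ℤ) : Hser A α = Hc α := by
  have h0 := heq 0 α
  rw [zero_add, Int.cast_zero, euler_prod, S_zddz, compLin_smul, ← G_Hc α, compLin_mul,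
    MvPowerSeries.smul_eq_C_mul] at h0
  have hV : compLin (Tinv 0) 1 0 * compLin (Tser 0) 1 0 = 1 := by
    rw [← compLin_mul, TinvTser, compLin_one]
  have hW : compLin (Tinv α) 0 1 * compLin (Tser α) 0 1 = 1 := by
    rw [← compLin_mul, TinvTser, compLin_one]
  have hZc : compLin Zser (-(α:ℂ)) 0 = compLin (PowerSeries.rescale (-(α:ℂ)) Zser) 1 0 := by
    rw [compLin_rescale, mul_one, mul_zero]
  have hSc : compLin Sser (-(α:ℂ)) 0 = compLin (PowerSeries.rescale (-(α:ℂ)) Sser) 1 0 := by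
    rw [compLin_rescale, mul_one, mul_zero]
  have key2 : genFun A 0 α =
      MvPowerSeries.C (σ := Fin 2) (R := ℂ) (1/2) *
        (compLin (PowerSeries.rescale (-(α:ℂ)) Zser * Sser) 1 0 * compLin (Tser α) 0 1 *
          compLin (Tinv α) 1 1) +
      compLin (PowerSeries.rescale (-(α:ℂ)) Sser * Sser) 1 0 * compLin (Tser α) 0 1 *
          compLin (Tinv α * (Hc α - Hser A α)) 1 1 := by
    have step : genFun A 0 α =
        (genFun A 0 α * compLin (Tinv 0) 1 0 * compLin (Tinv α) 0 1) *
          (compLin (Tser 0) 1 0 * compLin (Tser α) 0 1) := by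
      calc genFun A 0 α = genFun A 0 α *
            ((compLin (Tinv 0) 1 0 * compLin (Tser 0) 1 0) *
              (compLin (Tinv α) 0 1 * compLin (Tser α) 0 1)) := by
            rw [hV, hW]; ring
        _ = _ := by ring
    rw [step]
    have h0' : genFun A 0 α * compLin (Tinv 0) 1 0 * compLin (Tinv α) 0 1 =
        MvPowerSeries.C (σ := Fin 2) (R := ℂ) (1/2) *
          (compLin Zser (-(α:ℂ)) 0 * compLin (Tinv α) 1 1) +
        compLin Sser (-(α:ℂ)) 0 * (compLin (Tinv α) 1 1 *
          compLin (Hc α - Hser A α) 1 1) := by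
      rw [compLin_sub]
      linear_combination - h0
    rw [h0', Tser0, hZc, hSc, compLin_mul, compLin_mul, compLin_mul (Tinv α)]
    ring
  apply PowerSeries.ext
  intro n
  induction n using Nat.strong_induction_on with
  | _ n ih =>
    match n with
    | 0 => rw [coeff_Hser, coeff0_Hc]; norm_num
    | (k+1) =>
      have hco := congrArg (MvPowerSeries.coeff (e2 1 k)) key2
      rw [coeff_genFun, map_add, MvPowerSeries.coeff_C_mul, lemmaE, lemmaE] at hco
      rw [coeff1_mul_rescale _ _ _ Z1 S1, coeff0_mul_rescale, Z0, S0,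
        coeff1_mul_rescale _ _ _ S1 S1, coeff0_mul_rescale, S0] at hco
      rw [Y_zddz_G] at hco
      have hD : ∀ q < k + 1, PowerSeries.coeff q (Hc α - Hser A α) = 0 := by
        intro q hq
        rw [map_sub, ← ih q hq, sub_self]
      rw [coeff_Y_zddz_GD _ _ _ _ (coeff0_Tser α) (coeff0_Tinv α) hD] at hco
      have hA : A 0 1 α k = PowerSeries.coeff (k+1) (Hser A α) := by
        rw [coeff_Hser]
        by_cases h : 2 ≤ k + 1 ∧ Even (k + 1)
        · rw [if_pos h]
          congr 1
        · rw [if_neg h]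
          apply hodd
          intro hev
          have hev' : Even (k + 1) := by rwa [add_comm] at hev
          have hk0 : k ≠ 0 := by
            rintro rfl
            exact (Nat.not_even_one) hev'
          exact h ⟨by omega, hev'⟩
      rw [hA] at hco
      set x := PowerSeries.coeff (k+1) (Hser A α)
      set y := PowerSeries.coeff (k+1) (Hc α)
      have hsub : PowerSeries.coeff (k+1) (Hc α - Hser A α) = y - x := by
        rw [map_sub]
      rw [hsub] at hco
      have h3 : ((k:ℂ) + 2) * (x - y) = 0 := by
        push_cast at hco
        linear_combination hco
      have h4 : ((k:ℂ) + 2) ≠ 0 := by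
        have : ((k + 2 : ℕ) : ℂ) ≠ 0 := Nat.cast_ne_zero.mpr (by omega)
        push_cast at this
        exact this
      have h5 : x - y = 0 := by
        rcases mul_eq_zero.mp h3 with h | h
        · exact absurd h h4
        · exact h
      exact sub_eq_zero.mp h5

/-- Uniqueness of the coefficient family `A`: if `A_{β,k₁;γ,k₂} ∈ ℂ`
is symmetric, vanishes when `k₁+k₂` is odd, and for all `α₁,α₂ ∈ ℤ` (with `α = α₁+α₂`)
satisfies
`(1 + z₁∂_{z₁} + z₂∂_{z₂})[S(α₁z₂−α₂z₁)(1/T_α)(z₁+z₂)]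
= A_{α₁,α₂}(z₁,z₂)·(1/T_{α₁})(z₁)·(1/T_{α₂})(z₂)
+ S(α₁z₂−α₂z₁)(1/T_α)(z₁+z₂)·Σ_{h≥1}A_{0,1;α,2h−1}(z₁+z₂)^{2h}`,
then `A` is uniquely determined; in fact
`A_{α₁,α₂}(z₁,z₂) = (T_{α₁}(z₁)T_{α₂}(z₂)/T_{α₁+α₂}(z₁+z₂))·(ζ̄(α₁z₂−α₂z₁)/2)`. -/
theorem A_uniquely_determined (A : ℤ → ℕ → ℤ → ℕ → ℂ)
    (hsym : ∀ (β : ℤ) (k₁ : ℕ) (γ : ℤ) (k₂ : ℕ), A β k₁ γ k₂ = A γ k₂ β k₁)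
    (hodd : ∀ (β : ℤ) (k₁ : ℕ) (γ : ℤ) (k₂ : ℕ), ¬ Even (k₁ + k₂) → A β k₁ γ k₂ = 0)
    (heq : ∀ α₁ α₂ : ℤ,
      eulerOp (compLin Sser (-(α₂ : ℂ)) (α₁ : ℂ) * compLin (Tinv (α₁ + α₂)) 1 1) =
        genFun A α₁ α₂ * compLin (Tinv α₁) 1 0 * compLin (Tinv α₂) 0 1 +
          compLin Sser (-(α₂ : ℂ)) (α₁ : ℂ) * compLin (Tinv (α₁ + α₂)) 1 1 *
            compLin (Hser A (α₁ + α₂)) 1 1) :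
    ∀ α₁ α₂ : ℤ,
      genFun A α₁ α₂ =
        (1 / 2 : ℂ) •
          (compLin (Tser α₁) 1 0 * compLin (Tser α₂) 0 1 *
            compLin (Tinv (α₁ + α₂)) 1 1 * compLin Zser (-(α₂ : ℂ)) (α₁ : ℂ)) := by
  intro α₁ α₂
  have h := heq α₁ α₂
  rw [euler_prod, S_zddz, compLin_smul, ← G_Hc (α₁ + α₂), compLin_mul,
    MvPowerSeries.smul_eq_C_mul, Hstep A hodd heq (α₁ + α₂)] at h
  have h' : genFun A α₁ α₂ * compLin (Tinv α₁) 1 0 * compLin (Tinv α₂) 0 1 =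
      MvPowerSeries.C (σ := Fin 2) (R := ℂ) (1/2) *
        (compLin Zser (-(α₂:ℂ)) (α₁:ℂ) * compLin (Tinv (α₁ + α₂)) 1 1) := by
    linear_combination - h
  have hU1 : compLin (Tinv α₁) 1 0 * compLin (Tser α₁) 1 0 = 1 := by
    rw [← compLin_mul, TinvTser, compLin_one]
  have hU2 : compLin (Tinv α₂) 0 1 * compLin (Tser α₂) 0 1 = 1 := by
    rw [← compLin_mul, TinvTser, compLin_one]
  rw [MvPowerSeries.smul_eq_C_mul]
  calc genFun A α₁ α₂
      = genFun A α₁ α₂ * ((compLin (Tinv α₁) 1 0 * compLin (Tser α₁) 1 0) *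
          (compLin (Tinv α₂) 0 1 * compLin (Tser α₂) 0 1)) := by rw [hU1, hU2]; ring
    _ = (genFun A α₁ α₂ * compLin (Tinv α₁) 1 0 * compLin (Tinv α₂) 0 1) *
          (compLin (Tser α₁) 1 0 * compLin (Tser α₂) 0 1) := by ring
    _ = MvPowerSeries.C (σ := Fin 2) (R := ℂ) (1/2) *
          (compLin Zser (-(α₂:ℂ)) (α₁:ℂ) * compLin (Tinv (α₁ + α₂)) 1 1) *
          (compLin (Tser α₁) 1 0 * compLin (Tser α₂) 0 1) := by rw [h']
    _ = _ := by ring
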